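/- Let w ∈ W be a basic involution. Then the orbit of f_w under the coadjoint action of the diagonal torus T equals the set of all forms f_{w,ξ}: {t.f_w : t ∈ T} = {f_{w,ξ} : ξ a map Supp(w) → ℂ^×}. -/

import Mathlib

/-!
The Weyl group of type `Dₙ`, realized as the group of permutations `w` of `ℤ`
supported on `{±1, …, ±n}` with `w (-i) = - w i` and an even number of sign changes.
-/

open Equiv

/-- The simple reflections of type `Dₙ`, indexed by `i ∈ {1, …, n}`:
`sᵢ = (i, i+1)(-i, -(i+1))` for `1 ≤ i ≤ n - 1`, and
`sₙ = (n-1, -n)(-(n-1), n)`. -/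
def simpleRefl (n : ℕ) (i : ℕ) : Equiv.Perm ℤ :=
  if i < n then Equiv.swap (i : ℤ) ((i : ℤ) + 1) * Equiv.swap (-(i : ℤ)) (-((i : ℤ) + 1))
  else Equiv.swap ((n : ℤ) - 1) (-(n : ℤ)) * Equiv.swap (-((n : ℤ) - 1)) (n : ℤ)

/-- A word in the letters `{1, …, n}` (indices of simple reflections). -/
def IsWord (n : ℕ) (L : List ℕ) : Prop := ∀ i ∈ L, 1 ≤ i ∧ i ≤ n

/-- The product `s_{i₁} ⋯ s_{i_l}` of the word `L = [i₁, …, i_l]`. -/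
def wordProd (n : ℕ) (L : List ℕ) : Equiv.Perm ℤ := (L.map (simpleRefl n)).prod

/-- Membership in the Weyl group `W` of type `Dₙ`: a permutation of `ℤ` commuting with
negation, fixing every integer of absolute value `> n`, and with an even number of
`i ∈ {1, …, n}` such that `w i < 0`. -/
def IsD (n : ℕ) (w : Equiv.Perm ℤ) : Prop :=
  (∀ i : ℤ, w (-i) = -(w i)) ∧ (∀ i : ℤ, (n : ℤ) < |i| → w i = i) ∧
    Even (((Finset.Icc (1 : ℤ) (n : ℤ)).filter fun i => w i < 0).card)

/-- The length `ℓ(w)`: the minimal number of factors in an expression of `w` as a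
product of simple reflections. -/
noncomputable def weylLength (n : ℕ) (w : Equiv.Perm ℤ) : ℕ :=
  sInf {l | ∃ L : List ℕ, IsWord n L ∧ L.length = l ∧ wordProd n L = w}

/-- `L` is a reduced decomposition of `w`. -/
def IsReducedWord (n : ℕ) (w : Equiv.Perm ℤ) (L : List ℕ) : Prop :=
  IsWord n L ∧ wordProd n L = w ∧ L.length = weylLength n w

/-- `w` is a basic involution: `w ∈ W`, `w² = id`, and `w i ≠ -i` for all `i ∈ {1, …, n}`. -/
def IsBasicInvolution (n : ℕ) (w : Equiv.Perm ℤ) : Prop :=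
  IsD n w ∧ w * w = 1 ∧ ∀ i : ℤ, 1 ≤ i → i ≤ (n : ℤ) → w i ≠ -i

/-!
The group `SO₂ₙ(ℂ)`, its subgroups `B`, `U`, `T`, and the coadjoint action on `𝔫*`.
Rows and columns of `2n × 2n` matrices are indexed by `1, …, n, -n, …, -1`; the index
`i > 0` labels row `i - 1` (0-based) and the index `-j` labels row `2n - j` (0-based).
-/

/-- `2n × 2n` complex matrices. -/
abbrev Mat (n : ℕ) : Type := Matrix (Fin (2 * n)) (Fin (2 * n)) ℂ

/-- The matrix `J` with `1`'s on the antidiagonal and `0`'s elsewhere. -/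
def antidiagJ (n : ℕ) : Mat n :=
  Matrix.of fun i j => if (i : ℕ) + (j : ℕ) = 2 * n - 1 then 1 else 0

/-- The strictly lower-triangular part of a matrix. -/
def lowPart (n : ℕ) (M : Mat n) : Mat n :=
  Matrix.of fun i j => if (j : ℕ) < (i : ℕ) then M i j else 0

/-- Membership in `SO₂ₙ(ℂ) = {g ∈ SL₂ₙ(ℂ) : gᵀ J g = J}`. -/
def IsSO (n : ℕ) (g : Mat n) : Prop :=
  g.det = 1 ∧ g.transpose * antidiagJ n * g = antidiagJ n

/-- The Borel subgroup `B`: upper-triangular matrices in `SO₂ₙ(ℂ)`. -/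
def Bset (n : ℕ) : Set (Mat n) :=
  {g | IsSO n g ∧ ∀ i j : Fin (2 * n), (j : ℕ) < (i : ℕ) → g i j = 0}

/-- The unipotent radical `U`: upper-triangular matrices in `SO₂ₙ(ℂ)` with `1`'s on
the diagonal. -/
def Uset (n : ℕ) : Set (Mat n) := {g | g ∈ Bset n ∧ ∀ i, g i i = 1}

/-- The maximal torus `T`: diagonal matrices in `SO₂ₙ(ℂ)`. -/
def Tset (n : ℕ) : Set (Mat n) := {g | IsSO n g ∧ ∀ i j, i ≠ j → g i j = 0}

/-- The coadjoint action `b.λ = (b λ b⁻¹)_low`. -/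
noncomputable def coad (n : ℕ) (b lam : Mat n) : Mat n := lowPart n (b * lam * b⁻¹)

/-- The support of an involution `w`, encoded as triples: `(i, j, false)` stands for the
root `ε_{i+1} - ε_{j+1}` (so `w (i+1) = j+1`), `(i, j, true)` for `ε_{i+1} + ε_{j+1}`
(so `w (i+1) = -(j+1)`); here `i < j` as elements of `Fin n` (0-based indexing). -/
def suppFinset (n : ℕ) (w : Equiv.Perm ℤ) : Finset (Fin n × Fin n × Bool) :=
  Finset.univ.filter fun r =>
    r.1 < r.2.1 ∧
      ((r.2.2 = false ∧ w (((r.1 : ℕ) : ℤ) + 1) = ((r.2.1 : ℕ) : ℤ) + 1) ∨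
       (r.2.2 = true ∧ w (((r.1 : ℕ) : ℤ) + 1) = -(((r.2.1 : ℕ) : ℤ) + 1)))

/-- The basis vector `e_β*` of `𝔫*`: for `β = ε_i - ε_j` (1-based `i < j`),
`e_β* = E_{j,i} - E_{-i,-j}`; for `β = ε_i + ε_j`, `e_β* = E_{-j,i} - E_{-i,j}`. -/
def eStar (n : ℕ) (r : Fin n × Fin n × Bool) : Mat n :=
  if r.2.2 then
    Matrix.single ⟨2 * n - 1 - (r.2.1 : ℕ), by have := r.2.1.isLt; omega⟩
        ⟨(r.1 : ℕ), by have := r.1.isLt; omega⟩ 1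
      - Matrix.single ⟨2 * n - 1 - (r.1 : ℕ), by have := r.1.isLt; omega⟩
        ⟨(r.2.1 : ℕ), by have := r.2.1.isLt; omega⟩ 1
  else
    Matrix.single ⟨(r.2.1 : ℕ), by have := r.2.1.isLt; omega⟩
        ⟨(r.1 : ℕ), by have := r.1.isLt; omega⟩ 1
      - Matrix.single ⟨2 * n - 1 - (r.1 : ℕ), by have := r.1.isLt; omega⟩
        ⟨2 * n - 1 - (r.2.1 : ℕ), by have := r.2.1.isLt; omega⟩ 1

/-- The linear form `f_{w,ξ} = ∑_{β ∈ Supp(w)} ξ(β) e_β*`. -/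
noncomputable def fwxi (n : ℕ) (w : Equiv.Perm ℤ) (xi : Fin n × Fin n × Bool → ℂˣ) : Mat n :=
  ∑ r ∈ suppFinset n w, ((xi r : ℂ) • eStar n r)

/-- The linear form `f_w = ∑_{β ∈ Supp(w)} e_β*`. -/
noncomputable def fw (n : ℕ) (w : Equiv.Perm ℤ) : Mat n := ∑ r ∈ suppFinset n w, eStar n r

/-- The coadjoint `B`-orbit `Ω_w` of `f_w`. -/
def OmegaSet (n : ℕ) (w : Equiv.Perm ℤ) : Set (Mat n) :=
  {m | ∃ b ∈ Bset n, m = coad n b (fw n w)}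

/-- The coadjoint `U`-orbit `Θ_{w,ξ}` of `f_{w,ξ}`. -/
def ThetaSet (n : ℕ) (w : Equiv.Perm ℤ) (xi : Fin n × Fin n × Bool → ℂˣ) : Set (Mat n) :=
  {m | ∃ u ∈ Uset n, m = coad n u (fwxi n w xi)}


/-! ### Auxiliary machinery for Statement 7 -/

def scalSt7 (n : ℕ) (d : Fin (2*n) → ℂˣ) (r : Fin n × Fin n × Bool) : ℂˣ :=
  if r.2.2 then
    d ⟨2*n-1-(r.2.1:ℕ), by have := r.2.1.isLt; omega⟩ * (d ⟨(r.1:ℕ), by have := r.1.isLt; omega⟩)⁻¹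
  else
    d ⟨(r.2.1:ℕ), by have := r.2.1.isLt; omega⟩ * (d ⟨(r.1:ℕ), by have := r.1.isLt; omega⟩)⁻¹

lemma eStar_term (n : ℕ) (d : Fin (2*n) → ℂˣ)
    (hd : ∀ a b : Fin (2*n), (a:ℕ)+(b:ℕ)=2*n-1 → (d a : ℂ) * (d b : ℂ) = 1)
    (r : Fin n × Fin n × Bool) (hr : r.1 < r.2.1) (i j : Fin (2*n)) :
    (if (j:ℕ) < (i:ℕ) then (d i : ℂ) * eStar n r i j * ((d j : ℂ))⁻¹ else 0)
      = (scalSt7 n d r : ℂ) * eStar n r i j := by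
  obtain ⟨a, b, s⟩ := r
  have ha := a.isLt
  have hb := b.isLt
  have hr' : (a:ℕ) < (b:ℕ) := hr
  cases s <;>
    simp only [eStar, scalSt7, if_true, if_false, Bool.false_eq_true, Matrix.sub_apply,
      Matrix.single, Matrix.of_apply, Units.val_mul, Units.val_inv_eq_inv_val] <;>
    split_ifs <;>
    first
    | ring1
    | (simp only [Fin.ext_iff, Fin.val_mk] at *; omega)
    | (casesm* _ ∧ _ <;> subst_vars <;> ring1)
    | (casesm* _ ∧ _
       subst_vars
       have ea : ((d ⟨2*n-1-(a:ℕ), by have := a.isLt; omega⟩ : ℂˣ) : ℂ)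
           = (((d ⟨(a:ℕ), by have := a.isLt; omega⟩ : ℂˣ) : ℂ))⁻¹ :=
         eq_inv_of_mul_eq_one_left (hd _ _ (by simp; omega))
       have eb : ((d ⟨2*n-1-(b:ℕ), by have := b.isLt; omega⟩ : ℂˣ) : ℂ)
           = (((d ⟨(b:ℕ), by have := b.isLt; omega⟩ : ℂˣ) : ℂ))⁻¹ :=
         eq_inv_of_mul_eq_one_left (hd _ _ (by simp; omega))
       rw [ea, eb]
       have na : ((d ⟨(a:ℕ), by have := a.isLt; omega⟩ : ℂˣ) : ℂ) ≠ 0 := Units.ne_zero _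
       have nb : ((d ⟨(b:ℕ), by have := b.isLt; omega⟩ : ℂˣ) : ℂ) ≠ 0 := Units.ne_zero _
       field_simp
       try ring1)

lemma fw_eq_fwxi_one (n : ℕ) (w : Equiv.Perm ℤ) : fw n w = fwxi n w (fun _ => 1) := by
  simp [fw, fwxi]

lemma coad_diag (n : ℕ) (d : Fin (2*n) → ℂˣ)
    (hd : ∀ a b : Fin (2*n), (a:ℕ)+(b:ℕ)=2*n-1 → (d a : ℂ) * (d b : ℂ) = 1)
    (w : Equiv.Perm ℤ) (xi : Fin n × Fin n × Bool → ℂˣ) :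
    coad n (Matrix.diagonal fun i => (d i : ℂ)) (fwxi n w xi)
      = fwxi n w (fun r => scalSt7 n d r * xi r) := by
  have hinv : (Matrix.diagonal fun i => (d i : ℂ))⁻¹
      = Matrix.diagonal fun i => (((d i)⁻¹ : ℂˣ) : ℂ) :=
    Matrix.inv_eq_right_inv (by
      rw [Matrix.diagonal_mul_diagonal]
      have : (fun i => (d i : ℂ) * (((d i)⁻¹ : ℂˣ) : ℂ)) = fun _ => (1:ℂ) := by
        funext i; simp
      rw [this, Matrix.diagonal_one])
  unfold coad
  rw [hinv]
  ext i j
  simp only [lowPart, Matrix.of_apply, fwxi, Matrix.mul_diagonal, Matrix.diagonal_mul,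
    Matrix.sum_apply, Matrix.smul_apply, smul_eq_mul, Units.val_inv_eq_inv_val]
  split_ifs with hc
  · rw [Finset.mul_sum, Finset.sum_mul]
    refine Finset.sum_congr rfl fun r hrmem => ?_
    have hr : r.1 < r.2.1 := ((Finset.mem_filter.mp hrmem).2).1
    have hterm := eStar_term n d hd r hr i j
    rw [if_pos hc] at hterm
    push_cast [Units.val_mul]
    linear_combination (xi r : ℂ) * hterm
  · symm
    refine Finset.sum_eq_zero fun r hrmem => ?_
    have hr : r.1 < r.2.1 := ((Finset.mem_filter.mp hrmem).2).1
    have hterm := eStar_term n d hd r hr i j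
    rw [if_neg hc] at hterm
    push_cast [Units.val_mul]
    linear_combination (-(xi r : ℂ)) * hterm

lemma supp_uniq (n : ℕ) (w : Equiv.Perm ℤ) (hodd : ∀ i : ℤ, w (-i) = -(w i))
    {r r' : Fin n × Fin n × Bool} (h : r ∈ suppFinset n w) (h' : r' ∈ suppFinset n w)
    (he : r.2.1 = r'.2.1) : r = r' := by
  obtain ⟨a, c, s⟩ := r
  obtain ⟨a', c', s'⟩ := r'
  simp only at he
  subst he
  obtain ⟨-, -, hc⟩ := Finset.mem_filter.mp h
  obtain ⟨-, -, hc'⟩ := Finset.mem_filter.mp h'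
  simp only at hc hc'
  rcases hc with ⟨hs, heq⟩ | ⟨hs, heq⟩ <;> rcases hc' with ⟨hs', heq'⟩ | ⟨hs', heq'⟩ <;>
      subst hs <;> subst hs'
  · have := w.injective (heq.trans heq'.symm)
    have : a = a' := Fin.ext (by omega)
    rw [this]
  · have h3 : w (-(((a' : ℕ) : ℤ) + 1)) = ((c : ℕ) : ℤ) + 1 := by
      rw [hodd, heq', neg_neg]
    have := w.injective (heq.trans h3.symm)
    omega
  · have h3 : w (-(((a' : ℕ) : ℤ) + 1)) = -(((c : ℕ) : ℤ) + 1) := by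
      rw [hodd, heq']
    have := w.injective (heq.trans h3.symm)
    omega
  · have := w.injective (heq.trans heq'.symm)
    have : a = a' := Fin.ext (by omega)
    rw [this]

lemma supp_ne (n : ℕ) (w : Equiv.Perm ℤ) (hodd : ∀ i : ℤ, w (-i) = -(w i))
    (hw2 : ∀ x : ℤ, w (w x) = x)
    {r r' : Fin n × Fin n × Bool} (h : r ∈ suppFinset n w) (h' : r' ∈ suppFinset n w) :
    r'.2.1 ≠ r.1 := by
  intro he
  obtain ⟨a, c, s⟩ := r
  obtain ⟨a', c', s'⟩ := r'
  simp only at he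
  subst he
  obtain ⟨-, hlt, hc⟩ := Finset.mem_filter.mp h
  obtain ⟨-, hlt', hc'⟩ := Finset.mem_filter.mp h'
  have hl : (c' : ℕ) < (c : ℕ) := hlt
  have hl' : (a' : ℕ) < (c' : ℕ) := hlt'
  simp only at hc hc'
  have key : w (((c' : ℕ) : ℤ) + 1) = ((a' : ℕ) : ℤ) + 1 ∨
      w (((c' : ℕ) : ℤ) + 1) = -(((a' : ℕ) : ℤ) + 1) := by
    rcases hc' with ⟨-, heq'⟩ | ⟨-, heq'⟩
    · left
      have := hw2 (((a' : ℕ) : ℤ) + 1)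
      rw [heq'] at this
      exact this
    · right
      have := hw2 (((a' : ℕ) : ℤ) + 1)
      rw [heq', hodd] at this
      omega
  rcases hc with ⟨-, heq⟩ | ⟨-, heq⟩ <;> rcases key with hk | hk <;> rw [heq] at hk <;> omega


def mkUnits (n : ℕ) (t : Mat n)
    (hd0 : ∀ a b : Fin (2*n), (a:ℕ)+(b:ℕ)=2*n-1 → t a a * t b b = 1) : Fin (2*n) → ℂˣ :=
  fun i => ⟨t i i,
    t ⟨2*n-1-(i:ℕ), by have := i.isLt; omega⟩ ⟨2*n-1-(i:ℕ), by have := i.isLt; omega⟩,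
    hd0 _ _ (by simp; omega), hd0 _ _ (by simp; omega)⟩

noncomputable def vFun (n : ℕ) (w : Equiv.Perm ℤ) (xi : Fin n × Fin n × Bool → ℂˣ) :
    Fin n → ℂˣ :=
  fun jj => ∏ r ∈ suppFinset n w, (if r.2.1 = jj then (if r.2.2 then (xi r)⁻¹ else xi r) else 1)

noncomputable def dFun (n : ℕ) (w : Equiv.Perm ℤ) (xi : Fin n × Fin n × Bool → ℂˣ) :
    Fin (2*n) → ℂˣ :=
  fun i => if h : (i:ℕ) < n then vFun n w xi ⟨(i:ℕ), h⟩
           else (vFun n w xi ⟨2*n-1-(i:ℕ), by have := i.isLt; omega⟩)⁻¹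

lemma dFun_pair (n : ℕ) (w : Equiv.Perm ℤ) (xi : Fin n × Fin n × Bool → ℂˣ) :
    ∀ a b : Fin (2*n), (a:ℕ)+(b:ℕ)=2*n-1 → (dFun n w xi a : ℂ) * dFun n w xi b = 1 := by
  intro a b hab
  have ha := a.isLt
  have hb := b.isLt
  unfold dFun
  rcases lt_or_ge (a:ℕ) n with h | h
  · have hbn : ¬ (b:ℕ) < n := by omega
    rw [dif_pos h, dif_neg hbn,
      show (⟨2*n-1-(b:ℕ), by omega⟩ : Fin n) = ⟨(a:ℕ), h⟩ from Fin.ext (by simp; omega)]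
    simp
  · have hbn : (b:ℕ) < n := by omega
    rw [dif_neg (by omega : ¬ (a:ℕ) < n), dif_pos hbn,
      show (⟨2*n-1-(a:ℕ), by omega⟩ : Fin n) = ⟨(b:ℕ), hbn⟩ from Fin.ext (by simp; omega)]
    simp

lemma scal_dFun (n : ℕ) (w : Equiv.Perm ℤ) (hodd : ∀ i : ℤ, w (-i) = -(w i))
    (hw2 : ∀ x : ℤ, w (w x) = x) (xi : Fin n × Fin n × Bool → ℂˣ)
    {r : Fin n × Fin n × Bool} (hr : r ∈ suppFinset n w) :
    scalSt7 n (dFun n w xi) r = xi r := by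
  have hv1 : vFun n w xi r.1 = 1 := by
    unfold vFun
    exact Finset.prod_eq_one fun r' hr' => if_neg (supp_ne n w hodd hw2 hr hr')
  have hv2 : vFun n w xi r.2.1 = (if r.2.2 then (xi r)⁻¹ else xi r) := by
    unfold vFun
    rw [Finset.prod_eq_single_of_mem r hr
      (fun r' h' hne => if_neg fun he => hne (supp_uniq n w hodd h' hr he)), if_pos rfl]
  have hb1 := r.1.isLt
  have hb2 := r.2.1.isLt
  cases hs : r.2.2
  · simp only [scalSt7, hs, Bool.false_eq_true, if_false]
    unfold dFun
    rw [dif_pos (by simpa using hb2), dif_pos (by simpa using hb1)]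
    rw [show (⟨((⟨(r.2.1:ℕ), by omega⟩ : Fin (2*n)):ℕ), by simpa using hb2⟩ : Fin n) = r.2.1 from
      Fin.ext (by simp)]
    rw [show (⟨((⟨(r.1:ℕ), by omega⟩ : Fin (2*n)):ℕ), by simpa using hb1⟩ : Fin n) = r.1 from
      Fin.ext (by simp)]
    rw [hv1, hv2, hs, if_neg (by simp)]
    simp
  · simp only [scalSt7, hs, if_true]
    unfold dFun
    rw [dif_neg (by simp; omega), dif_pos (by simpa using hb1)]
    rw [show (⟨2*n-1-((⟨2*n-1-(r.2.1:ℕ), by omega⟩ : Fin (2*n)):ℕ), by simp; omega⟩ : Fin n)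
        = r.2.1 from Fin.ext (by simp; omega)]
    rw [show (⟨((⟨(r.1:ℕ), by omega⟩ : Fin (2*n)):ℕ), by simpa using hb1⟩ : Fin n) = r.1 from
      Fin.ext (by simp)]
    rw [hv1, hv2, hs, if_pos rfl]
    simp

/-- Let `w` be a basic involution in the Weyl group of type `Dₙ`,
`n ≥ 4`. Then the orbit of `f_w` under the coadjoint action of the diagonal torus `T`
is exactly the set of all the forms `f_{w,ξ}`, `ξ : Supp(w) → ℂˣ`. -/
theorem statement7 (n : ℕ) (hn : 4 ≤ n) (w : Equiv.Perm ℤ)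
    (hw : IsBasicInvolution n w) :
    {m : Mat n | ∃ t ∈ Tset n, m = coad n t (fw n w)} =
      {m : Mat n | ∃ xi : Fin n × Fin n × Bool → ℂˣ, m = fwxi n w xi} := by
  obtain ⟨⟨hodd, -, -⟩, hsq, -⟩ := hw
  have hw2 : ∀ x : ℤ, w (w x) = x := by
    intro x
    have : (w * w) x = (1 : Equiv.Perm ℤ) x := by rw [hsq]
    simpa [Equiv.Perm.mul_apply] using this
  ext m
  simp only [Set.mem_setOf_eq]
  constructor
  · rintro ⟨t, ⟨⟨hdet, hJ⟩, hdiag⟩, rfl⟩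
    have hteq : t = Matrix.diagonal (fun i => t i i) := by
      ext i j
      by_cases h : i = j
      · subst h; rw [Matrix.diagonal_apply_eq]
      · rw [Matrix.diagonal_apply_ne _ h]; exact hdiag i j h
    have hd0 : ∀ a b : Fin (2*n), (a:ℕ)+(b:ℕ) = 2*n-1 → t a a * t b b = 1 := by
      intro a b hab
      rw [hteq, Matrix.diagonal_transpose] at hJ
      have h2 : (Matrix.diagonal (fun i => t i i) * antidiagJ n
          * Matrix.diagonal (fun i => t i i)) a b = antidiagJ n a b := by rw [hJ]
      rw [Matrix.mul_diagonal, Matrix.diagonal_mul] at h2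
      unfold antidiagJ at h2
      simp only [Matrix.of_apply] at h2
      rw [if_pos hab] at h2
      linear_combination h2
    refine ⟨fun r => scalSt7 n (mkUnits n t hd0) r * 1, ?_⟩
    rw [fw_eq_fwxi_one]
    conv_lhs => rw [hteq]
    exact coad_diag n (mkUnits n t hd0) (fun a b hab => hd0 a b hab) w (fun _ => 1)
  · rintro ⟨xi, rfl⟩
    refine ⟨Matrix.diagonal (fun i => (dFun n w xi i : ℂ)), ⟨⟨?_, ?_⟩, ?_⟩, ?_⟩
    · rw [Matrix.det_diagonal]
      refine Finset.prod_involution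
        (fun a _ => (⟨2*n-1-(a:ℕ), by have := a.isLt; omega⟩ : Fin (2*n)))
        (fun a _ => dFun_pair n w xi a _ (by simp; have := a.isLt; omega))
        (fun a _ _ => ?_) (fun a _ => Finset.mem_univ _) (fun a _ => ?_)
      · intro hcon
        have := congrArg Fin.val hcon
        simp at this
        have := a.isLt
        omega
      · apply Fin.ext
        have := a.isLt
        simp
        omega
    · rw [Matrix.diagonal_transpose]
      ext a b
      rw [Matrix.mul_diagonal, Matrix.diagonal_mul]
      unfold antidiagJ
      simp only [Matrix.of_apply]
      split_ifs with h
      · rw [mul_one]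
        exact dFun_pair n w xi a b h
      · ring
    · exact fun i j hij => Matrix.diagonal_apply_ne _ hij
    · rw [fw_eq_fwxi_one, coad_diag n (dFun n w xi) (dFun_pair n w xi) w (fun _ => 1)]
      unfold fwxi
      refine Finset.sum_congr rfl fun r hr => ?_
      have : scalSt7 n (dFun n w xi) r * 1 = xi r := by
        rw [mul_one, scal_dFun n w hodd hw2 xi hr]
      simp only [this]
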